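/- arXiv:1210.1336 — 2 statements merged into one kernel-verified Lean document; each statement's English description precedes it below -/
import Mathlib

section
/- Let G be a finite simple graph that is r-partite (its vertex set is partitioned into r independent sets), unmixed, and perfect, and suppose every maximal clique of G has size r. Then G belongs to the class 𝒢, i.e., there exist α(G) cliques of G whose union of vertex sets is all of V(G). -/
/-- A set of vertices is independent if its elements are pairwise nonadjacent. -/
def SimpleGraph.IsIndepSet' {V : Type} (G : SimpleGraph V) (s : Set V) : Prop :=
  s.Pairwise fun u v => ¬ G.Adj u v

/-- `α(G)`: the maximum cardinality of an independent set of vertices of `G`. -/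
noncomputable def SimpleGraph.indepNum' {V : Type} (G : SimpleGraph V) : ℕ :=
  sSup {n | ∃ s : Finset V, G.IsIndepSet' ↑s ∧ s.card = n}

/-- `G` is `r`-partite: its vertex set is partitioned into `r` independent sets. -/
def SimpleGraph.IsRPartite {V : Type} (G : SimpleGraph V) (r : ℕ) : Prop :=
  ∃ P : Fin r → Set V, (∀ v, ∃! i, v ∈ P i) ∧ ∀ i, G.IsIndepSet' (P i)

/-- Every maximal clique of `G` has cardinality `r`. -/
def SimpleGraph.MaximalCliquesHaveCard {V : Type} (G : SimpleGraph V) (r : ℕ) : Prop :=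
  ∀ s : Finset V, G.IsClique ↑s → (∀ t : Finset V, G.IsClique ↑t → s ⊆ t → s = t) →
    s.card = r

/-- `G` belongs to the class `𝒢`: there are `α(G)` cliques covering all vertices of `G`. -/
def SimpleGraph.InClassG {V : Type} (G : SimpleGraph V) : Prop :=
  ∃ Q : Fin G.indepNum' → Finset V, (∀ i, G.IsClique ↑(Q i)) ∧ ∀ v, ∃ i, v ∈ Q i

/-- `A` is a vertex cover of `G`: it meets every edge. -/
def SimpleGraph.IsVertexCover' {V : Type} (G : SimpleGraph V) (A : Finset V) : Prop :=
  ∀ ⦃u v⦄, G.Adj u v → u ∈ A ∨ v ∈ A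

/-- `A` is a minimal vertex cover of `G`. -/
def SimpleGraph.IsMinimalVertexCover {V : Type} (G : SimpleGraph V) (A : Finset V) : Prop :=
  G.IsVertexCover' A ∧ ∀ B : Finset V, B ⊆ A → G.IsVertexCover' B → B = A

/-- `G` is unmixed: all minimal vertex covers have the same cardinality. -/
def SimpleGraph.Unmixed {V : Type} (G : SimpleGraph V) : Prop :=
  ∀ A B : Finset V, G.IsMinimalVertexCover A → G.IsMinimalVertexCover B → A.card = B.card

/-- `G` is perfect: for every induced subgraph, clique number equals chromatic number. -/
def SimpleGraph.IsPerfect {V : Type} (G : SimpleGraph V) : Prop :=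
  ∀ s : Set V, ((G.induce s).cliqueNum : ℕ∞) = (G.induce s).chromaticNumber

/-- `M` is a perfect `r`-matching of `G`: a set of pairwise disjoint cliques of size `r`
covering all vertices. -/
def SimpleGraph.IsPerfectRMatching {V : Type} (G : SimpleGraph V) (r : ℕ)
    (M : Finset (Finset V)) : Prop :=
  (∀ C ∈ M, G.IsNClique r C) ∧ (M : Set (Finset V)).Pairwise (fun C D => Disjoint C D) ∧
    ∀ v, ∃ C ∈ M, v ∈ C

/-- The depth of a commutative ring: the maximal length of a regular sequence. -/
noncomputable def ringDepth (R : Type) [CommRing R] : ℕ :=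
  sSup {n | ∃ rs : List R, rs.length = n ∧ RingTheory.Sequence.IsRegular R rs}

/-- The edge ideal of `G` over `K`, generated by `x_u x_v` for edges `{u,v}`. -/
noncomputable def SimpleGraph.edgeIdeal (K : Type) [Field K] {V : Type} (G : SimpleGraph V) :
    Ideal (MvPolynomial V K) :=
  Ideal.span {m | ∃ u v, G.Adj u v ∧ m = MvPolynomial.X u * MvPolynomial.X v}

/-- `G` is Cohen-Macaulay over `K`: the depth of the edge ring `S/I(G)` equals its
Krull dimension. -/
def SimpleGraph.IsCohenMacaulayOver (K : Type) [Field K] {V : Type}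
    (G : SimpleGraph V) : Prop :=
  (ringDepth (MvPolynomial V K ⧸ G.edgeIdeal K) : WithBot ℕ∞) =
    ringKrullDim (MvPolynomial V K ⧸ G.edgeIdeal K)


section WPGTAuxSection

set_option linter.unusedSectionVars false



set_option linter.unusedSectionVars false

namespace WPGTAux

open Finset

attribute [local instance] Classical.propDecidable

variable {V : Type} [Fintype V]

/-- Proper coloring of the vertices in `t` with colors `< m`. -/
def colOn (F : SimpleGraph V) (t : Finset V) (m : ℕ) : Prop :=
  ∃ c : V → ℕ, ∀ u ∈ t, c u < m ∧ ∀ w ∈ t, F.Adj u w → c u ≠ c w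

def cliqueSetOn (F : SimpleGraph V) (t : Finset V) : Set ℕ :=
  {n | ∃ s : Finset V, s ⊆ t ∧ F.IsClique ↑s ∧ s.card = n}

noncomputable def omegaOn (F : SimpleGraph V) (t : Finset V) : ℕ := sSup (cliqueSetOn F t)

variable {F : SimpleGraph V} {t : Finset V}

lemma zero_mem_cliqueSetOn : 0 ∈ cliqueSetOn F t :=
  ⟨∅, empty_subset _, by simp, rfl⟩

lemma bddAbove_cliqueSetOn : BddAbove (cliqueSetOn F t) := by
  refine ⟨t.card, fun n hn => ?_⟩
  obtain ⟨s, hs, -, rfl⟩ := hn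
  exact card_le_card hs

lemma exists_omegaOn (F : SimpleGraph V) (t : Finset V) :
    ∃ s : Finset V, s ⊆ t ∧ F.IsClique ↑s ∧ s.card = omegaOn F t :=
  Nat.sSup_mem ⟨0, zero_mem_cliqueSetOn⟩ bddAbove_cliqueSetOn

lemma le_omegaOn {s : Finset V} (hs : s ⊆ t) (hc : F.IsClique ↑s) :
    s.card ≤ omegaOn F t :=
  le_csSup bddAbove_cliqueSetOn ⟨s, hs, hc, rfl⟩

lemma omegaOn_mono {t' : Finset V} (h : t ⊆ t') : omegaOn F t ≤ omegaOn F t' := by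
  refine csSup_le ⟨0, zero_mem_cliqueSetOn⟩ fun n hn => ?_
  obtain ⟨s, hs, hc, rfl⟩ := hn
  exact le_omegaOn (hs.trans h) hc

lemma one_le_omegaOn {v : V} (hv : v ∈ t) : 1 ≤ omegaOn F t := by
  have := le_omegaOn (F := F) (singleton_subset_iff.mpr hv) (by simp)
  simpa using this

/-- stability expressed via cliques of the complement -/
lemma isClique_compl_iff {s : Finset V} :
    Fᶜ.IsClique ↑s ↔ ∀ u ∈ s, ∀ w ∈ s, F.Adj u w → False := by
  constructor
  · intro h u hu w hw hadj
    exact (h (mem_coe.mpr hu) (mem_coe.mpr hw) hadj.ne).2 hadj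
  · intro h u hu w hw hne
    exact (SimpleGraph.compl_adj F u w).mpr ⟨hne, fun ha => h u (mem_coe.mp hu) w (mem_coe.mp hw) ha⟩

lemma colOn_mono {m m' : ℕ} (h : m ≤ m') (hc : colOn F t m) : colOn F t m' := by
  obtain ⟨c, hc⟩ := hc
  exact ⟨c, fun u hu => ⟨lt_of_lt_of_le (hc u hu).1 h, (hc u hu).2⟩⟩

lemma colOn_card_le {m : ℕ} {s : Finset V} (hcol : colOn F t m) (hs : s ⊆ t)
    (hc : F.IsClique ↑s) : s.card ≤ m := by
  obtain ⟨c, hcc⟩ := hcol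
  have hinj : Set.InjOn c ↑s := by
    intro u hu w hw heq
    by_contra hne
    exact (hcc u (hs (mem_coe.mp hu))).2 w (hs (mem_coe.mp hw)) (hc hu hw hne) heq
  calc s.card = (s.image c).card := (card_image_of_injOn hinj).symm
    _ ≤ (range m).card := card_le_card (by
        intro j hj
        obtain ⟨u, hu, rfl⟩ := mem_image.mp hj
        exact mem_range.mpr (hcc u (hs hu)).1)
    _ = m := card_range m

lemma colOn_insert_stable {m : ℕ} {A : Finset V} (hA : A ⊆ t) (hst : Fᶜ.IsClique ↑A)
    (hcol : colOn F (t \ A) m) : colOn F t (m + 1) := by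
  obtain ⟨c, hc⟩ := hcol
  refine ⟨fun u => if u ∈ A then m else c u, fun u hu => ?_⟩
  by_cases huA : u ∈ A
  · refine ⟨by simp [huA], fun w hw hadj => ?_⟩
    by_cases hwA : w ∈ A
    · exact absurd hadj (isClique_compl_iff.mp hst u huA w hwA)
    · have hwt : w ∈ t \ A := mem_sdiff.mpr ⟨hw, hwA⟩
      simp only [if_pos huA, if_neg hwA]
      exact Nat.ne_of_gt (hc w hwt).1
  · have hut : u ∈ t \ A := mem_sdiff.mpr ⟨hu, huA⟩
    refine ⟨by simp only [if_neg huA]; exact Nat.lt_succ_of_lt (hc u hut).1, fun w hw hadj => ?_⟩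
    by_cases hwA : w ∈ A
    · simp only [if_neg huA, if_pos hwA]
      exact Nat.ne_of_lt (hc u hut).1
    · have hwt : w ∈ t \ A := mem_sdiff.mpr ⟨hw, hwA⟩
      simp only [if_neg huA, if_neg hwA]
      exact (hc u hut).2 w hwt hadj

lemma stable_inter_clique_card_le_one {A K : Finset V} (hst : Fᶜ.IsClique ↑A)
    (hK : F.IsClique ↑K) : (A ∩ K).card ≤ 1 := by
  by_contra h
  obtain ⟨a, ha, b, hb, hne⟩ := one_lt_card.mp (not_le.mp h)
  have h1 := mem_inter.mp ha
  have h2 := mem_inter.mp hb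
  exact isClique_compl_iff.mp hst a h1.1 b h2.1 (hK (mem_coe.mpr h1.2) (mem_coe.mpr h2.2) hne)

theorem gasparian (F : SimpleGraph V) (t : Finset V)
    (hmin : ∀ t' : Finset V, t' ⊂ t → colOn F t' (omegaOn F t'))
    (hbad : ¬ colOn F t (omegaOn F t)) :
    omegaOn Fᶜ t * omegaOn F t + 1 ≤ t.card := by
  set ω := omegaOn F t with hωdef
  -- t is nonempty
  have htne : t.Nonempty := by
    rcases t.eq_empty_or_nonempty with rfl | h
    · exact absurd ⟨fun _ => 0, by simp⟩ hbad
    · exact h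
  obtain ⟨v₀, hv₀⟩ := htne
  have hω1 : 1 ≤ ω := one_le_omegaOn hv₀
  -- choose colorings of t.erase v with ω colors
  have hcolv : ∀ v : V, ∃ c : V → ℕ, v ∈ t →
      ∀ u ∈ t.erase v, c u < ω ∧ ∀ w ∈ t.erase v, F.Adj u w → c u ≠ c w := by
    intro v
    by_cases hv : v ∈ t
    · obtain ⟨c, hc⟩ := colOn_mono (omegaOn_mono (erase_subset v t)) (hmin _ (erase_ssubset hv))
      exact ⟨c, fun _ => hc⟩
    · exact ⟨fun _ => 0, fun h => absurd h hv⟩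
  choose col hcol using hcolv
  -- color classes
  set Acl : V → ℕ → Finset V := fun v j => (t.erase v).filter (fun u => col v u = j) with hAcldef
  have hAcl_sub : ∀ v j, Acl v j ⊆ t := fun v j =>
    (filter_subset _ _).trans (erase_subset _ _)
  have hAcl_stable : ∀ v ∈ t, ∀ j : ℕ, Fᶜ.IsClique ↑(Acl v j) := by
    intro v hv j
    rw [isClique_compl_iff]
    intro u hu w hw hadj
    obtain ⟨hu1, hu2⟩ := mem_filter.mp hu
    obtain ⟨hw1, hw2⟩ := mem_filter.mp hw
    exact (hcol v hv u hu1).2 w hw1 hadj (hu2.trans hw2.symm)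
  -- every color class is nonempty
  have hAcl_ne : ∀ v ∈ t, ∀ j < ω, (Acl v j).Nonempty := by
    intro v hv j hj
    rw [nonempty_iff_ne_empty]
    intro hempty
    have hnotj : ∀ u ∈ t.erase v, col v u ≠ j := by
      intro u hu hcu
      exact (eq_empty_iff_forall_notMem.mp hempty u) (mem_filter.mpr ⟨hu, hcu⟩)
    have hcol' : colOn F (t.erase v) (ω - 1) := by
      refine ⟨fun u => if j < col v u then col v u - 1 else col v u, fun u hu => ?_⟩
      have h1 := (hcol v hv u hu).1
      have h2 := hnotj u hu
      constructor
      · by_cases h : j < col v u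
        · simp only [if_pos h]; omega
        · simp only [if_neg h]; omega
      · intro w hw hadj
        have h3 := (hcol v hv u hu).2 w hw hadj
        have h4 := hnotj w hw
        have h5 := (hcol v hv w hw).1
        by_cases hcu : j < col v u <;> by_cases hcw : j < col v w <;>
          simp only [if_pos, if_neg, hcu, hcw, if_true, if_false] <;> omega
    have hcontra : colOn F t ω := by
      rw [erase_eq] at hcol'
      have := colOn_insert_stable (A := {v}) (singleton_subset_iff.mpr hv) (by simp) hcol'
      rwa [Nat.sub_add_cancel hω1] at this
    exact hbad hcontra
  -- maximum stable set
  obtain ⟨s₀, hs₀t, hs₀st, hs₀card⟩ := exists_omegaOn Fᶜ t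
  have hα1 : 1 ≤ omegaOn Fᶜ t := one_le_omegaOn (F := Fᶜ) hv₀
  have hs₀ne : s₀.Nonempty := by rw [← card_pos, hs₀card]; omega
  -- P1 : if v is not in an ω-clique K, then K meets every color class of v's coloring
  have P1 : ∀ v ∈ t, ∀ K : Finset V, K ⊆ t → F.IsClique ↑K → K.card = ω → v ∉ K →
      ∀ j < ω, (K ∩ Acl v j).Nonempty := by
    intro v hv K hKt hKc hKcard hvK j hj
    have hKe : K ⊆ t.erase v := subset_erase.mpr ⟨hKt, hvK⟩
    have hinj : Set.InjOn (col v) ↑K := by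
      intro u hu w hw heq
      by_contra hne
      exact (hcol v hv u (hKe (mem_coe.mp hu))).2 w (hKe (mem_coe.mp hw)) (hKc hu hw hne) heq
    have him : K.image (col v) = range ω := by
      refine eq_of_subset_of_card_le ?_ ?_
      · intro x hx
        obtain ⟨u, hu, rfl⟩ := mem_image.mp hx
        exact mem_range.mpr (hcol v hv u (hKe hu)).1
      · rw [card_image_of_injOn hinj, hKcard, card_range]
    have : j ∈ K.image (col v) := him ▸ mem_range.mpr hj
    obtain ⟨u, hu, hcu⟩ := mem_image.mp this
    exact ⟨u, mem_inter.mpr ⟨hu, mem_filter.mpr ⟨hKe hu, hcu⟩⟩⟩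
  -- P2 : if v is in an ω-clique K, then K misses at most one color class of v's coloring
  have P2 : ∀ v ∈ t, ∀ K : Finset V, K ⊆ t → F.IsClique ↑K → K.card = ω → v ∈ K →
      ∀ j j', j < ω → j' < ω → K ∩ Acl v j = ∅ → K ∩ Acl v j' = ∅ → j = j' := by
    intro v hv K hKt hKc hKcard hvK j j' hj hj' hej hej'
    by_contra hne
    have hK't : K.erase v ⊆ t.erase v := erase_subset_erase v hKt
    have hK'c : F.IsClique ↑(K.erase v) := hKc.subset (coe_subset.mpr (erase_subset v K))
    have hinj : Set.InjOn (col v) ↑(K.erase v) := by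
      intro u hu w hw heq
      by_contra hne'
      exact (hcol v hv u (hK't (mem_coe.mp hu))).2 w (hK't (mem_coe.mp hw))
        (hK'c hu hw hne') heq
    have himcard : ((K.erase v).image (col v)).card = ω - 1 := by
      rw [card_image_of_injOn hinj, card_erase_of_mem hvK, hKcard]
    have hnotmem : ∀ x, K ∩ Acl v x = ∅ → x ∉ (K.erase v).image (col v) := by
      intro x hx hmem
      obtain ⟨u, hu, hcu⟩ := mem_image.mp hmem
      have hut : u ∈ t.erase v := hK't hu
      have huKA : u ∈ K ∩ Acl v x :=
        mem_inter.mpr ⟨erase_subset v K hu, mem_filter.mpr ⟨hut, hcu⟩⟩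
      rw [hx] at huKA
      exact notMem_empty u huKA
    have hsub : insert j (insert j' ((K.erase v).image (col v))) ⊆ range ω := by
      intro x hx
      rcases mem_insert.mp hx with rfl | hx
      · exact mem_range.mpr hj
      rcases mem_insert.mp hx with rfl | hx
      · exact mem_range.mpr hj'
      · obtain ⟨u, hu, rfl⟩ := mem_image.mp hx
        exact mem_range.mpr (hcol v hv u (hK't hu)).1
    have hcard := card_le_card hsub
    rw [card_insert_of_notMem (by
        simp only [mem_insert]
        push_neg
        exact ⟨hne, hnotmem j hej⟩),
      card_insert_of_notMem (hnotmem j' hej'), himcard, card_range] at hcard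
    omega
  -- existence of ω-cliques avoiding a nonempty stable set
  have hKex : ∀ A : Finset V, A ⊆ t → Fᶜ.IsClique ↑A → A.Nonempty →
      ∃ K : Finset V, K ⊆ t ∧ F.IsClique ↑K ∧ K.card = ω ∧ K ∩ A = ∅ := by
    intro A hAt hAst hAne
    have hssub : t \ A ⊂ t := Finset.sdiff_ssubset hAt hAne
    have hcolA := hmin _ hssub
    have hωle : ω ≤ omegaOn F (t \ A) := by
      by_contra hlt
      push_neg at hlt
      have h1 : colOn F (t \ A) (ω - 1) := colOn_mono (by omega) hcolA
      have h2 := colOn_insert_stable hAt hAst h1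
      rw [Nat.sub_add_cancel hω1] at h2
      exact hbad h2
    obtain ⟨K₀, hK₀sub, hK₀c, hK₀card⟩ := exists_omegaOn F (t \ A)
    obtain ⟨K, hKsub, hKcard⟩ := exists_subset_card_eq (s := K₀) (n := ω) (by omega)
    refine ⟨K, (hKsub.trans hK₀sub).trans sdiff_subset,
      hK₀c.subset (coe_subset.mpr hKsub), hKcard, ?_⟩
    rw [eq_empty_iff_forall_notMem]
    intro u hu
    obtain ⟨h1, h2⟩ := mem_inter.mp hu
    exact (mem_sdiff.mp (hK₀sub (hKsub h1))).2 h2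
  -- the family of αω + 1 stable sets
  let AF : ({x // x ∈ s₀} × Fin ω) ⊕ Unit → Finset V :=
    Sum.elim (fun p => Acl p.1.1 p.2.1) (fun _ => s₀)
  have hAF_inl : ∀ (v : {x // x ∈ s₀}) (j : Fin ω), AF (Sum.inl (v, j)) = Acl v.1 j.1 := fun _ _ => rfl
  have hAF_inr : ∀ u, AF (Sum.inr u) = s₀ := fun _ => rfl
  have hAF_sub : ∀ I, AF I ⊆ t := by
    rintro (⟨⟨v, hv⟩, j⟩ | u)
    · exact hAcl_sub v j
    · exact hs₀t
  have hAF_stable : ∀ I, Fᶜ.IsClique ↑(AF I) := by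
    rintro (⟨⟨v, hv⟩, j⟩ | u)
    · exact hAcl_stable v (hs₀t hv) j
    · exact hs₀st
  have hAF_ne : ∀ I, (AF I).Nonempty := by
    rintro (⟨⟨v, hv⟩, j⟩ | u)
    · exact hAcl_ne v (hs₀t hv) j j.isLt
    · exact hs₀ne
  have hKch : ∀ I, ∃ K : Finset V, K ⊆ t ∧ F.IsClique ↑K ∧ K.card = ω ∧ K ∩ AF I = ∅ :=
    fun I => hKex (AF I) (hAF_sub I) (hAF_stable I) (hAF_ne I)
  choose KF hKF_sub hKF_c hKF_card hKF_disj using hKch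
  -- key: for I ≠ J, the stable set AF I meets the clique KF J
  have hmeet : ∀ I J, I ≠ J → (AF I ∩ KF J).Nonempty := by
    intro I J hne
    have hKt := hKF_sub J
    have hKc := hKF_c J
    have hKcard := hKF_card J
    have hdisj := hKF_disj J
    rw [inter_comm]
    rcases J with ⟨⟨v, hv⟩, j⟩ | uJ
    · rw [hAF_inl] at hdisj
      have hvt : v ∈ t := hs₀t hv
      have hvK : v ∈ KF (Sum.inl (⟨v, hv⟩, j)) := by
        by_contra hvK
        obtain ⟨u, hu⟩ := P1 v hvt _ hKt hKc hKcard hvK j.1 j.isLt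
        rw [hdisj] at hu
        exact notMem_empty u hu
      rcases I with ⟨⟨v', hv'⟩, j'⟩ | uI
      · rw [hAF_inl]
        by_cases hvv : v' = v
        · subst hvv
          have hjj : (j' : ℕ) ≠ (j : ℕ) := by
            intro h
            exact hne (by
              congr 1
              exact Prod.ext (Subtype.ext rfl) (Fin.ext h))
          rw [nonempty_iff_ne_empty]
          intro hempty
          exact hjj (P2 v' hvt _ hKt hKc hKcard hvK j'.1 j.1 j'.isLt j.isLt hempty hdisj)
        · have hv'K : v' ∉ KF (Sum.inl (⟨v, hv⟩, j)) := by
            intro hmem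
            have hlt : 1 < (s₀ ∩ KF (Sum.inl (⟨v, hv⟩, j))).card :=
              one_lt_card.mpr ⟨v, mem_inter.mpr ⟨hv, hvK⟩, v',
                mem_inter.mpr ⟨hv', hmem⟩, fun h => hvv h.symm⟩
            have hle := stable_inter_clique_card_le_one hs₀st hKc
            omega
          exact P1 v' (hs₀t hv') _ hKt hKc hKcard hv'K j'.1 j'.isLt
      · rw [hAF_inr]
        exact ⟨v, mem_inter.mpr ⟨hvK, hv⟩⟩
    · rw [hAF_inr] at hdisj
      rcases I with ⟨⟨v', hv'⟩, j'⟩ | uI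
      · rw [hAF_inl]
        have hv'K : v' ∉ KF (Sum.inr uJ) := by
          intro hmem
          have : v' ∈ KF (Sum.inr uJ) ∩ s₀ := mem_inter.mpr ⟨hmem, hv'⟩
          rw [hdisj] at this
          exact notMem_empty v' this
        exact P1 v' (hs₀t hv') _ hKt hKc hKcard hv'K j'.1 j'.isLt
      · exact absurd (by cases uI; cases uJ; rfl) hne
  -- intersection cardinalities
  have hcard_inter : ∀ I J, (AF I ∩ KF J).card = if I = J then 0 else 1 := by
    intro I J
    by_cases h : I = J
    · subst h
      rw [if_pos rfl, card_eq_zero, inter_comm]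
      exact hKF_disj I
    · rw [if_neg h]
      have h1 := stable_inter_clique_card_le_one (hAF_stable I) (hKF_c J)
      have h2 := card_pos.mpr (hmeet I J h)
      omega
  -- linear independence of indicator vectors
  let x : ({x // x ∈ s₀} × Fin ω) ⊕ Unit → ({v // v ∈ t} → ℚ) :=
    fun I v => if (v : V) ∈ AF I then 1 else 0
  have cardSum : ∀ S : Finset V, S ⊆ t →
      (∑ v : {v // v ∈ t}, (if (v : V) ∈ S then (1 : ℚ) else 0)) = S.card := by
    intro S hS
    rw [Finset.univ_eq_attach, Finset.sum_attach t (fun v => if v ∈ S then (1 : ℚ) else 0),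
      Finset.sum_boole]
    congr 1
    rw [Finset.filter_mem_eq_inter, inter_eq_right.mpr hS]
  have hx_li : LinearIndependent ℚ x := by
    rw [Fintype.linearIndependent_iff]
    intro g hg
    have hpt : ∀ v : {v // v ∈ t}, (∑ I, g I * x I v) = 0 := by
      intro v
      have := congrFun hg v
      simpa [Finset.sum_apply, smul_eq_mul] using this
    have hEval : ∀ J, (∑ I, g I * ((AF I ∩ KF J).card : ℚ)) = 0 := by
      intro J
      calc (∑ I, g I * ((AF I ∩ KF J).card : ℚ))
          = ∑ I, ∑ v : {v // v ∈ t}, g I * (if (v : V) ∈ AF I ∩ KF J then (1 : ℚ) else 0) := by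
            refine Finset.sum_congr rfl fun I _ => ?_
            rw [← Finset.mul_sum, cardSum _ ((inter_subset_right).trans (hKF_sub J))]
        _ = ∑ v : {v // v ∈ t}, ∑ I, g I * (if (v : V) ∈ AF I ∩ KF J then (1 : ℚ) else 0) :=
            Finset.sum_comm
        _ = 0 := by
            refine Finset.sum_eq_zero fun v _ => ?_
            by_cases hvK : (v : V) ∈ KF J
            · have hterm : ∀ I, g I * (if (v : V) ∈ AF I ∩ KF J then (1 : ℚ) else 0)
                  = g I * x I v := by
                intro I
                congr 1
                simp [x, Finset.mem_inter, hvK]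
              rw [Finset.sum_congr rfl fun I _ => hterm I]
              exact hpt v
            · refine Finset.sum_eq_zero fun I _ => ?_
              rw [if_neg (fun hmem => hvK (mem_inter.mp hmem).2), mul_zero]
    have hgs : ∀ J, g J = ∑ I, g I := by
      intro J
      have h0 := hEval J
      rw [← Finset.sum_erase_add _ _ (mem_univ J), hcard_inter J J, if_pos rfl] at h0
      simp only [Nat.cast_zero, mul_zero, add_zero] at h0
      have herase : (∑ I ∈ Finset.univ.erase J, g I * ((AF I ∩ KF J).card : ℚ))
          = ∑ I ∈ Finset.univ.erase J, g I := by
        refine Finset.sum_congr rfl fun I hI => ?_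
        rw [hcard_inter I J, if_neg (Finset.ne_of_mem_erase hI)]
        simp
      rw [herase] at h0
      have htot := Finset.add_sum_erase Finset.univ g (mem_univ J)
      rw [h0, add_zero] at htot
      exact htot
    intro J
    set Sg : ℚ := ∑ I, g I with hSg
    have hsum : Sg = (Fintype.card (({x // x ∈ s₀} × Fin ω) ⊕ Unit) : ℚ) * Sg := by
      calc Sg = ∑ J', g J' := hSg
        _ = ∑ _J' : ({x // x ∈ s₀} × Fin ω) ⊕ Unit, Sg :=
            Finset.sum_congr rfl fun J' _ => hgs J'
        _ = (Fintype.card (({x // x ∈ s₀} × Fin ω) ⊕ Unit) : ℚ) * Sg := by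
            rw [Finset.sum_const, Finset.card_univ, nsmul_eq_mul]
    have hcardι : Fintype.card (({x // x ∈ s₀} × Fin ω) ⊕ Unit) = s₀.card * ω + 1 := by
      simp [Fintype.card_coe]
    have hSg0 : Sg = 0 := by
      rw [hcardι] at hsum
      have h2 : (2 : ℚ) ≤ ((s₀.card * ω + 1 : ℕ) : ℚ) := by
        have : 2 ≤ s₀.card * ω + 1 := by
          have := hs₀ne.card_pos
          nlinarith
        exact_mod_cast this
      nlinarith
    rw [hgs J]
    exact hSg0
  -- count dimensions
  have hdim := hx_li.fintype_card_le_finrank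
  rw [Module.finrank_pi ℚ] at hdim
  have hcardι : Fintype.card (({x // x ∈ s₀} × Fin ω) ⊕ Unit) = s₀.card * ω + 1 := by
    simp [Fintype.card_coe]
  rw [hcardι, Fintype.card_coe] at hdim
  rw [← hs₀card]
  exact hdim

lemma easyBound (G : SimpleGraph V) (hperfect : G.IsPerfect) (t : Finset V) :
    t.card ≤ omegaOn G t * omegaOn Gᶜ t := by
  have hp := hperfect (↑t : Set V)
  have hcol : (G.induce (↑t : Set V)).Colorable (G.induce (↑t : Set V)).cliqueNum :=
    SimpleGraph.chromaticNumber_le_iff_colorable.mp hp.ge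
  obtain ⟨c⟩ := hcol
  set m := (G.induce (↑t : Set V)).cliqueNum with hm
  -- m ≤ omegaOn G t
  have hmle : m ≤ omegaOn G t := by
    obtain ⟨sH, hsH⟩ := (G.induce (↑t : Set V)).exists_isNClique_cliqueNum
    have hsub : sH.map (Function.Embedding.subtype _) ⊆ t := by
      intro u hu
      obtain ⟨a, _, rfl⟩ := Finset.mem_map.mp hu
      exact Finset.mem_coe.mp a.2
    have hclique : G.IsClique ↑(sH.map (Function.Embedding.subtype _)) := by
      intro u hu w hw hne
      obtain ⟨a, ha, rfl⟩ := Finset.mem_map.mp (Finset.mem_coe.mp hu)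
      obtain ⟨b, hb, rfl⟩ := Finset.mem_map.mp (Finset.mem_coe.mp hw)
      have hab : a ≠ b := fun h => hne (by rw [h])
      exact hsH.1 (Finset.mem_coe.mpr ha) (Finset.mem_coe.mpr hb) hab
    have := le_omegaOn hsub hclique
    rwa [Finset.card_map, hsH.2] at this
  -- fiberwise counting
  set cc : V → ℕ := fun v => if h : v ∈ t then (c ⟨v, Finset.mem_coe.mpr h⟩ : Fin m).1 else 0
    with hccdef
  have hccmem : ∀ v ∈ t, cc v ∈ range m := by
    intro v hv
    rw [mem_range]
    simp only [hccdef, dif_pos hv]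
    exact (c ⟨v, Finset.mem_coe.mpr hv⟩).isLt
  have hcardsum := card_eq_sum_card_fiberwise hccmem
  have hfiber : ∀ j ∈ range m, (t.filter fun v => cc v = j).card ≤ omegaOn Gᶜ t := by
    intro j _
    refine le_omegaOn (filter_subset _ _) ?_
    rw [isClique_compl_iff]
    intro u hu w hw hadj
    obtain ⟨hut, hcu⟩ := mem_filter.mp hu
    obtain ⟨hwt, hcw⟩ := mem_filter.mp hw
    have hadj' : (G.induce (↑t : Set V)).Adj ⟨u, Finset.mem_coe.mpr hut⟩ ⟨w, Finset.mem_coe.mpr hwt⟩ := hadj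
    refine c.valid hadj' ?_
    apply Fin.ext
    have h1 : cc u = (c ⟨u, Finset.mem_coe.mpr hut⟩ : Fin m).1 := by
      simp only [hccdef, dif_pos hut]
    have h2 : cc w = (c ⟨w, Finset.mem_coe.mpr hwt⟩ : Fin m).1 := by
      simp only [hccdef, dif_pos hwt]
    rw [← h1, ← h2, hcu, hcw]
  calc t.card = ∑ j ∈ range m, (t.filter fun v => cc v = j).card := hcardsum
    _ ≤ (range m).card • omegaOn Gᶜ t := Finset.sum_le_card_nsmul _ _ _ hfiber
    _ = m * omegaOn Gᶜ t := by rw [card_range, smul_eq_mul]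
    _ ≤ omegaOn G t * omegaOn Gᶜ t := Nat.mul_le_mul_right _ hmle

theorem complColorableOn (G : SimpleGraph V) (hperfect : G.IsPerfect) (t : Finset V) :
    colOn Gᶜ t (omegaOn Gᶜ t) := by
  induction t using Finset.strongInduction with
  | _ t ih =>
    by_contra hbad
    have hgas := gasparian Gᶜ t ih hbad
    rw [compl_compl] at hgas
    have heasy := easyBound G hperfect t
    omega

end WPGTAux


end WPGTAuxSection

/-- If a finite simple graph `G` is `r`-partite, unmixed, and perfect, and every maximal
clique of `G` has size `r`, then `G` belongs to the class `𝒢`. -/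
theorem rpartite_unmixed_perfect_mem_classG {V : Type} [Fintype V] (G : SimpleGraph V)
    (r : ℕ) (hpart : G.IsRPartite r) (hunmixed : G.Unmixed) (hperfect : G.IsPerfect)
    (hmax : G.MaximalCliquesHaveCard r) :
    G.InClassG := by
  classical
  obtain ⟨c, hc⟩ := WPGTAux.complColorableOn G hperfect Finset.univ
  have hα : WPGTAux.omegaOn Gᶜ Finset.univ = G.indepNum' := by
    unfold SimpleGraph.indepNum' WPGTAux.omegaOn WPGTAux.cliqueSetOn
    congr 1
    ext n
    constructor
    · rintro ⟨s, -, hcl, hcard⟩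
      refine ⟨s, ?_, hcard⟩
      intro u hu w hw hne hadj
      exact (hcl hu hw hne).2 hadj
    · rintro ⟨s, hind, hcard⟩
      refine ⟨s, Finset.subset_univ s, ?_, hcard⟩
      intro u hu w hw hne
      exact (SimpleGraph.compl_adj G u w).mpr ⟨hne, hind hu hw hne⟩
  refine ⟨fun i => Finset.univ.filter (fun v => c v = i.1), fun i => ?_, fun v => ?_⟩
  · intro u hu w hw hne
    have hu' := (Finset.mem_filter.mp (Finset.mem_coe.mp hu)).2
    have hw' := (Finset.mem_filter.mp (Finset.mem_coe.mp hw)).2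
    by_contra hna
    exact (hc u (Finset.mem_univ u)).2 w (Finset.mem_univ w)
      ((SimpleGraph.compl_adj G u w).mpr ⟨hne, hna⟩) (hu'.trans hw'.symm)
  · have hv := (hc v (Finset.mem_univ v)).1
    rw [hα] at hv
    exact ⟨⟨c v, hv⟩, Finset.mem_filter.mpr ⟨Finset.mem_univ v, rfl⟩⟩
end

section
/- Let G be a finite simple r-partite graph that is unmixed, such that every maximal clique of G has size r, and such that G belongs to the class 𝒢. Then G has a perfect r-matching, i.e., V(G) can be partitioned into pairwise disjoint cliques each of size exactly r. -/
section AuxPM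
variable {V : Type} [Fintype V] (G : SimpleGraph V)

lemma aux_indep_card_le (s : Finset V) (hs : G.IsIndepSet' ↑s) : s.card ≤ G.indepNum' :=
  le_csSup ⟨Fintype.card V, fun _ ⟨t, _, ht⟩ => ht ▸ Finset.card_le_univ t⟩ ⟨s, hs, rfl⟩

lemma aux_exists_max_indep : ∃ s : Finset V, G.IsIndepSet' ↑s ∧ s.card = G.indepNum' := by
  have h0 : (0:ℕ) ∈ {n | ∃ s : Finset V, G.IsIndepSet' ↑s ∧ s.card = n} :=
    ⟨∅, by simp [SimpleGraph.IsIndepSet'], by simp⟩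
  have hb : BddAbove {n | ∃ s : Finset V, G.IsIndepSet' ↑s ∧ s.card = n} :=
    ⟨Fintype.card V, fun _ ⟨t, _, ht⟩ => ht ▸ Finset.card_le_univ t⟩
  exact Nat.sSup_mem ⟨0, h0⟩ hb

/-- extend a clique to a maximal clique -/
lemma aux_extend_clique (s : Finset V) (hs : G.IsClique ↑s) :
    ∃ t : Finset V, s ⊆ t ∧ G.IsClique ↑t ∧
      ∀ u : Finset V, G.IsClique ↑u → t ⊆ u → t = u := by
  classical
  obtain ⟨t, ht, htmax⟩ := Finset.exists_max_image
    (Finset.univ.filter (fun t : Finset V => G.IsClique ↑t ∧ s ⊆ t)) Finset.card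
    ⟨s, by simp [hs]⟩
  simp only [Finset.mem_filter, Finset.mem_univ, true_and] at ht htmax
  refine ⟨t, ht.2, ht.1, fun u hu hsub => Finset.eq_of_subset_of_card_le hsub ?_⟩
  exact htmax u ⟨hu, ht.2.trans hsub⟩

variable [DecidableEq V]

/-- complement of a maximal independent set is a minimal vertex cover -/
lemma aux_compl_min_cover (A : Finset V) (hA : G.IsIndepSet' ↑A)
    (hAmax : ∀ v ∉ A, ∃ w ∈ A, G.Adj v w) :
    G.IsMinimalVertexCover Aᶜ := by
  constructor
  · intro u v huv
    by_contra h
    push_neg at h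
    simp only [Finset.mem_compl, not_not] at h
    exact hA h.1 h.2 huv.ne huv
  · intro B hB hBcov
    refine Finset.Subset.antisymm hB (fun x hx => ?_)
    rw [Finset.mem_compl] at hx
    by_contra hxB
    obtain ⟨w, hwA, hadj⟩ := hAmax x hx
    rcases hBcov hadj with h | h
    · exact hxB h
    · exact (Finset.mem_compl.mp (hB h)) hwA

lemma aux_maximal_indep_card_eq (hunmixed : G.Unmixed) (A B : Finset V)
    (hA : G.IsIndepSet' ↑A) (hAmax : ∀ v ∉ A, ∃ w ∈ A, G.Adj v w)
    (hB : G.IsIndepSet' ↑B) (hBmax : ∀ v ∉ B, ∃ w ∈ B, G.Adj v w) :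
    A.card = B.card := by
  have := hunmixed Aᶜ Bᶜ (aux_compl_min_cover G A hA hAmax) (aux_compl_min_cover G B hB hBmax)
  rw [Finset.card_compl, Finset.card_compl] at this
  have hA' := Finset.card_le_univ A
  have hB' := Finset.card_le_univ B
  omega

/-- a maximum independent set is maximal -/
lemma aux_max_indep_is_maximal (S : Finset V) (hS : G.IsIndepSet' ↑S)
    (hcard : ∀ s : Finset V, G.IsIndepSet' ↑s → s.card ≤ S.card) :
    ∀ v ∉ S, ∃ w ∈ S, G.Adj v w := by
  intro v hv
  by_contra h
  push_neg at h
  have hins : G.IsIndepSet' ↑(insert v S) := by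
    rw [Finset.coe_insert]
    haveI : Std.Symm (fun u v : V => ¬ G.Adj u v) := ⟨fun a b hab hba => hab hba.symm⟩
    exact (Set.pairwise_insert_of_symm).mpr ⟨hS, fun w hw _ had => h w hw had⟩
  have := hcard _ hins
  rw [Finset.card_insert_of_notMem hv] at this
  omega

end AuxPM

/-- If `G` is an `r`-partite unmixed graph in the class `𝒢` such that every maximal
clique of `G` has size `r`, then `G` has a perfect `r`-matching. -/
theorem exists_perfect_matching {V : Type} [Fintype V] (G : SimpleGraph V) (r : ℕ)
    (hpart : G.IsRPartite r) (hunmixed : G.Unmixed) (hmax : G.MaximalCliquesHaveCard r)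
    (hG : G.InClassG) :
    ∃ M : Finset (Finset V), G.IsPerfectRMatching r M := by
  classical
  obtain ⟨P, hPmem, hPind⟩ := hpart
  obtain ⟨Q, hQclique, hQcov⟩ := hG
  -- extend the covering cliques to maximal cliques, which have card r
  choose C hQC hCclique hCmax using fun i => aux_extend_clique G (Q i) (hQclique i)
  have hCcard : ∀ i, (C i).card = r := fun i => hmax _ (hCclique i) (hCmax i)
  have hCcov : ∀ v, ∃ i, v ∈ C i := fun v => (hQcov v).imp (fun i h => hQC i h)
  -- the part-index function
  have g : ∀ v : V, {i : Fin r // v ∈ P i ∧ ∀ j, v ∈ P j → j = i} := fun v =>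
    ⟨(hPmem v).choose, (hPmem v).choose_spec.1, fun j hj => (hPmem v).choose_spec.2 j hj⟩
  -- on a clique, g is injective
  have ginj : ∀ t : Finset V, G.IsClique ↑t → ∀ u ∈ t, ∀ w ∈ t,
      (g u).1 = (g w).1 → u = w := by
    intro t ht u hu w hw hg
    by_contra hne
    have hadj : G.Adj u w := ht hu hw hne
    exact hPind (g u).1 (g u).2.1 (hg ▸ (g w).2.1) hne hadj
  -- parts as finsets: fibers of g
  set Pf : Fin r → Finset V := fun j => Finset.univ.filter (fun v => (g v).1 = j) with hPf
  have hPfmem : ∀ j v, v ∈ Pf j ↔ (g v).1 = j := by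
    intro j v; simp [hPf]
  have hPfind : ∀ j, G.IsIndepSet' ↑(Pf j) := by
    intro j
    refine (hPind j).mono ?_
    intro v hv
    rw [Finset.mem_coe, hPfmem] at hv
    exact hv ▸ (g v).2.1
  -- every vertex outside Pf j has a neighbor in Pf j
  have hPfmax : ∀ j, ∀ v ∉ Pf j, ∃ w ∈ Pf j, G.Adj v w := by
    intro j v hv
    rw [hPfmem] at hv
    obtain ⟨t, hvt, htcl, htmax⟩ := aux_extend_clique G {v} (by simp)
    have htcard : t.card = r := hmax t htcl htmax
    have hvmem : v ∈ t := hvt (Finset.mem_singleton_self v)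
    -- the image of t under g is all of Fin r
    have himg : Finset.image (fun v => (g v).1) t = Finset.univ := by
      apply Finset.eq_of_subset_of_card_le (Finset.subset_univ _)
      rw [Finset.card_image_of_injOn (fun a ha b hb => ginj t htcl a ha b hb), htcard]
      simp
    have hj : j ∈ Finset.image (fun v => (g v).1) t := himg ▸ Finset.mem_univ j
    obtain ⟨w, hwt, hwj⟩ := Finset.mem_image.mp hj
    refine ⟨w, (hPfmem j w).mpr hwj, ?_⟩
    have hne : v ≠ w := fun h => hv (h ▸ hwj)
    exact htcl hvmem hwt hne
  -- a maximum independent set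
  obtain ⟨S, hS, hScard⟩ := aux_exists_max_indep G
  have hSmax : ∀ v ∉ S, ∃ w ∈ S, G.Adj v w :=
    aux_max_indep_is_maximal G S hS
      (fun s hs => hScard ▸ aux_indep_card_le G s hs)
  -- all parts have card α
  have hPfcard : ∀ j, (Pf j).card = G.indepNum' := by
    intro j
    rw [← hScard]
    exact aux_maximal_indep_card_eq G hunmixed (Pf j) S (hPfind j) (hPfmax j) hS hSmax
  -- |V| = r * α
  have hVcard : Fintype.card V = r * G.indepNum' := by
    have := Finset.card_eq_sum_card_fiberwise
      (f := fun v => (g v).1) (s := Finset.univ) (t := Finset.univ)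
      (fun x _ => Finset.mem_univ _)
    rw [Finset.card_univ] at this
    calc Fintype.card V = ∑ j : Fin r, (Pf j).card := this
      _ = ∑ _j : Fin r, G.indepNum' := by
          exact Finset.sum_congr rfl (fun j _ => hPfcard j)
      _ = r * G.indepNum' := by simp [Finset.sum_const, mul_comm]
  -- total size of the cliques
  have hsum : ∑ i : Fin G.indepNum', (C i).card = r * G.indepNum' := by
    calc ∑ i : Fin G.indepNum', (C i).card = ∑ _i : Fin G.indepNum', r :=
          Finset.sum_congr rfl (fun i _ => hCcard i)
      _ = r * G.indepNum' := by simp [Finset.sum_const, mul_comm]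
  -- the extended cliques are pairwise disjoint
  have hdisj : ∀ i j : Fin G.indepNum', i ≠ j → Disjoint (C i) (C j) := by
    intro i j hij
    by_contra hnd
    obtain ⟨x, hxi, hxj⟩ := Finset.not_disjoint_iff.mp hnd
    set s2 : Finset (Fin G.indepNum') := (Finset.univ.erase i).erase j with hs2
    have hsub : Finset.univ ⊆ (C i ∪ C j) ∪ s2.biUnion C := by
      intro v _
      obtain ⟨k, hk⟩ := hCcov v
      by_cases hki : k = i
      · subst hki; exact Finset.mem_union_left _ (Finset.mem_union_left _ hk)
      by_cases hkj : k = j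
      · subst hkj; exact Finset.mem_union_left _ (Finset.mem_union_right _ hk)
      · refine Finset.mem_union_right _ (Finset.mem_biUnion.mpr ⟨k, ?_, hk⟩)
        simp [hs2, hki, hkj]
    have h1 : Fintype.card V ≤ (C i ∪ C j).card + (s2.biUnion C).card := by
      calc Fintype.card V = Finset.univ.card := (Finset.card_univ).symm
        _ ≤ ((C i ∪ C j) ∪ s2.biUnion C).card := Finset.card_le_card hsub
        _ ≤ _ := Finset.card_union_le _ _
    have h2 : (C i ∪ C j).card + (C i ∩ C j).card = (C i).card + (C j).card :=
      Finset.card_union_add_card_inter _ _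
    have h3 : 1 ≤ (C i ∩ C j).card :=
      Finset.card_pos.mpr ⟨x, Finset.mem_inter.mpr ⟨hxi, hxj⟩⟩
    have h4 : (s2.biUnion C).card ≤ ∑ k ∈ s2, (C k).card := Finset.card_biUnion_le
    have hj' : j ∈ Finset.univ.erase i := Finset.mem_erase.mpr ⟨fun h => hij h.symm, Finset.mem_univ j⟩
    have h5 : ∑ k ∈ s2, (C k).card + (C j).card = ∑ k ∈ Finset.univ.erase i, (C k).card :=
      Finset.sum_erase_add _ _ hj'
    have h6 : ∑ k ∈ Finset.univ.erase i, (C k).card + (C i).card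
        = ∑ k : Fin G.indepNum', (C k).card :=
      Finset.sum_erase_add _ _ (Finset.mem_univ i)
    rw [hsum] at h6
    have hci := hCcard i
    have hcj := hCcard j
    omega
  refine ⟨Finset.image C Finset.univ, ?_, ?_, ?_⟩
  · intro D hD
    obtain ⟨i, _, rfl⟩ := Finset.mem_image.mp hD
    exact ⟨hCclique i, hCcard i⟩
  · intro D hD E hE hne
    rw [Finset.mem_coe, Finset.mem_image] at hD hE
    obtain ⟨i, _, rfl⟩ := hD
    obtain ⟨j, _, rfl⟩ := hE
    exact hdisj i j (fun h => hne (by rw [h]))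
  · intro v
    obtain ⟨i, hi⟩ := hCcov v
    exact ⟨C i, Finset.mem_image_of_mem _ (Finset.mem_univ i), hi⟩
end
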